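/- Let X be a (75,32,10,16) strongly regular graph with a 4-clique K whose outside-degree distribution is (b_0,b_1,b_2,b_3)=(2,23,45,1) with b_4=0, and x0, x1 the two vertices with 0 neighbors in K. Then x0 and x1 each have exactly one neighbor among the vertices with exactly 1 neighbor in K, and these two neighbors are distinct. -/
import Mathlib

open Finset

/-- The number of neighbors of `x` inside the vertex set `K`. -/
def nbrs {V : Type*} [DecidableEq V] (G : SimpleGraph V) [DecidableRel G.Adj]
    (K : Finset V) (x : V) : ℕ :=
  (K.filter (fun y => G.Adj x y)).card

/-- The number of vertices outside `K` with exactly `i` neighbors in `K`. -/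
def bcount {V : Type*} [Fintype V] [DecidableEq V] (G : SimpleGraph V) [DecidableRel G.Adj]
    (K : Finset V) (i : ℕ) : ℕ :=
  ((univ \ K).filter (fun x => nbrs G K x = i)).card

section Aux
variable {V : Type*} [Fintype V] [DecidableEq V] (G : SimpleGraph V) [DecidableRel G.Adj]

private lemma common_card16 (hG : G.IsSRGWith 75 32 10 16) {v w : V} (h1 : v ≠ w)
    (h2 : ¬G.Adj v w) :
    (univ.filter fun z => G.Adj v z ∧ G.Adj w z).card = 16 := by
  have h := hG.of_not_adj h1 h2
  rw [← Set.toFinset_card] at h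
  rw [← h]
  congr 1
  ext z
  simp [Set.mem_toFinset, SimpleGraph.mem_commonNeighbors]

/-- A vertex with no neighbors in `K` has all its neighbors outside `K`. -/
private lemma adj_notMem {K : Finset V} {x : V} (hx : nbrs G K x = 0) {z : V}
    (hz : G.Adj x z) : z ∉ K := by
  intro hzK
  have h : z ∈ K.filter (fun y => G.Adj x y) := mem_filter.mpr ⟨hzK, hz⟩
  rw [nbrs, card_eq_zero] at hx
  rw [hx] at h
  exact absurd h (notMem_empty z)

/-- Main counting lemma: a vertex `x` with no neighbor in the 4-clique `K` has exactly
one neighbor of type 1 and thirty of type 2. -/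
private lemma type_counts (hG : G.IsSRGWith 75 32 10 16)
    (K : Finset V) (hK : G.IsNClique 4 K)
    (hb0 : bcount G K 0 = 2) (hb3 : bcount G K 3 = 1) (hb4 : bcount G K 4 = 0)
    (x x' x3 : V) (hne : x ≠ x')
    (hxK : x ∉ K) (hx : nbrs G K x = 0)
    (hx'K : x' ∉ K) (hx' : nbrs G K x' = 0)
    (hx3K : x3 ∉ K) (hx3 : nbrs G K x3 = 3)
    (hnadj : ¬ G.Adj x x') (h3 : G.Adj x x3) :
    (((univ \ K).filter (fun y => nbrs G K y = 1 ∧ G.Adj x y)).card = 1) ∧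
    (((univ \ K).filter (fun y => nbrs G K y = 2 ∧ G.Adj x y)).card = 30) := by
  classical
  set N : Finset V := univ.filter (fun z => G.Adj x z) with hN
  have hNcard : N.card = 32 := by
    rw [hN, ← SimpleGraph.neighborFinset_eq_filter]
    exact hG.regular x
  have hKcard : K.card = 4 := hK.card_eq
  have hNK : ∀ z ∈ N, z ∉ K := by
    intro z hz
    exact adj_notMem G hx (mem_filter.mp hz).2
  have hmaps : ∀ z ∈ N, nbrs G K z ∈ Finset.range 5 := by
    intro z _
    have : nbrs G K z ≤ K.card := card_filter_le _ _
    rw [hKcard] at this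
    exact mem_range.mpr (by omega)
  -- fiber cardinalities
  set a : ℕ → ℕ := fun i => (N.filter (fun z => nbrs G K z = i)).card with ha
  have hcard : N.card = ∑ i ∈ Finset.range 5, a i :=
    card_eq_sum_card_fiberwise hmaps
  -- the sum of nbrs over N equals 64
  have hsum : ∑ z ∈ N, nbrs G K z = 64 := by
    have h1 : ∑ z ∈ N, nbrs G K z = ∑ z ∈ N, ∑ k ∈ K, (if G.Adj z k then 1 else 0) := by
      apply Finset.sum_congr rfl
      intro z _
      rw [nbrs, card_filter]
    rw [h1, Finset.sum_comm]
    have h2 : ∀ k ∈ K, (∑ z ∈ N, (if G.Adj z k then 1 else 0)) = 16 := by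
      intro k hk
      have hxk : x ≠ k := fun h => hxK (h ▸ hk)
      have hnxk : ¬ G.Adj x k := by
        intro h
        exact (adj_notMem G hx h) hk
      have := common_card16 G hG hxk hnxk
      rw [← this, ← card_filter]
      rw [hN, filter_filter]
      congr 1
      ext z
      simp only [mem_filter, mem_univ, true_and]
      constructor
      · rintro ⟨h1, h2⟩; exact ⟨h1, h2.symm⟩
      · rintro ⟨h1, h2⟩; exact ⟨h1, h2.symm⟩
    rw [Finset.sum_congr rfl h2, Finset.sum_const, hKcard, smul_eq_mul]
  have hsum2 : ∑ z ∈ N, nbrs G K z = ∑ i ∈ Finset.range 5, i * a i := by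
    rw [← Finset.sum_fiberwise_of_maps_to hmaps (fun z => nbrs G K z)]
    apply Finset.sum_congr rfl
    intro i _
    have : ∀ z ∈ N.filter (fun z => nbrs G K z = i), nbrs G K z = i := by
      intro z hz; exact (mem_filter.mp hz).2
    rw [Finset.sum_congr rfl this, Finset.sum_const, smul_eq_mul, mul_comm]
  -- b-sets
  have hb0set : (univ \ K).filter (fun z => nbrs G K z = 0) = {x, x'} := by
    apply Finset.eq_of_superset_of_card_ge
    · intro z hz
      rcases mem_insert.mp hz with h | h
      · subst h; exact mem_filter.mpr ⟨mem_sdiff.mpr ⟨mem_univ _, hxK⟩, hx⟩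
      · rw [mem_singleton] at h; subst h
        exact mem_filter.mpr ⟨mem_sdiff.mpr ⟨mem_univ _, hx'K⟩, hx'⟩
    · rw [bcount] at hb0
      rw [hb0, card_insert_of_notMem (by simp [hne]), card_singleton]
  have hb3set : (univ \ K).filter (fun z => nbrs G K z = 3) = {x3} := by
    apply Finset.eq_of_superset_of_card_ge
    · intro z hz
      rw [mem_singleton] at hz; subst hz
      exact mem_filter.mpr ⟨mem_sdiff.mpr ⟨mem_univ _, hx3K⟩, hx3⟩
    · rw [bcount] at hb3
      rw [hb3, card_singleton]
  -- a 0 = 0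
  have ha0 : a 0 = 0 := by
    show (N.filter (fun z => nbrs G K z = 0)).card = 0
    rw [card_eq_zero]
    rw [eq_empty_iff_forall_notMem]
    intro z hz
    rcases mem_filter.mp hz with ⟨hzN, hz0⟩
    have hadj : G.Adj x z := (mem_filter.mp hzN).2
    have : z ∈ (univ \ K).filter (fun z => nbrs G K z = 0) :=
      mem_filter.mpr ⟨mem_sdiff.mpr ⟨mem_univ _, hNK z hzN⟩, hz0⟩
    rw [hb0set] at this
    rcases mem_insert.mp this with h | h
    · exact (G.ne_of_adj hadj).symm h
    · rw [mem_singleton] at h; subst h; exact hnadj hadj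
  -- a 3 = 1
  have ha3 : a 3 = 1 := by
    show (N.filter (fun z => nbrs G K z = 3)).card = 1
    have : N.filter (fun z => nbrs G K z = 3) = {x3} := by
      apply Finset.Subset.antisymm
      · intro z hz
        rcases mem_filter.mp hz with ⟨hzN, hz3⟩
        have : z ∈ (univ \ K).filter (fun z => nbrs G K z = 3) :=
          mem_filter.mpr ⟨mem_sdiff.mpr ⟨mem_univ _, hNK z hzN⟩, hz3⟩
        rw [hb3set] at this
        exact this
      · rw [singleton_subset_iff]
        exact mem_filter.mpr ⟨mem_filter.mpr ⟨mem_univ _, h3⟩, hx3⟩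
    rw [this, card_singleton]
  -- a 4 = 0
  have ha4 : a 4 = 0 := by
    show (N.filter (fun z => nbrs G K z = 4)).card = 0
    have hsub : N.filter (fun z => nbrs G K z = 4) ⊆
        (univ \ K).filter (fun z => nbrs G K z = 4) := by
      intro z hz
      rcases mem_filter.mp hz with ⟨hzN, hz4⟩
      exact mem_filter.mpr ⟨mem_sdiff.mpr ⟨mem_univ _, hNK z hzN⟩, hz4⟩
    have := card_le_card hsub
    rw [bcount] at hb4
    omega
  -- expand sums
  rw [hNcard] at hcard
  rw [hsum] at hsum2
  rw [Finset.sum_range_succ, Finset.sum_range_succ, Finset.sum_range_succ,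
    Finset.sum_range_succ, Finset.sum_range_succ, Finset.sum_range_zero] at hcard hsum2
  have ha1 : a 1 = 1 := by omega
  have ha2 : a 2 = 30 := by omega
  have he1 : (univ \ K).filter (fun y => nbrs G K y = 1 ∧ G.Adj x y)
      = N.filter (fun z => nbrs G K z = 1) := by
    ext z
    simp only [mem_filter, mem_sdiff, mem_univ, true_and, hN]
    constructor
    · rintro ⟨_, h1, h2⟩; exact ⟨h2, h1⟩
    · rintro ⟨h2, h1⟩; exact ⟨adj_notMem G hx h2, h1, h2⟩
  have he2 : (univ \ K).filter (fun y => nbrs G K y = 2 ∧ G.Adj x y)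
      = N.filter (fun z => nbrs G K z = 2) := by
    ext z
    simp only [mem_filter, mem_sdiff, mem_univ, true_and, hN]
    constructor
    · rintro ⟨_, h1, h2⟩; exact ⟨h2, h1⟩
    · rintro ⟨h2, h1⟩; exact ⟨adj_notMem G hx h2, h1, h2⟩
  exact ⟨by rw [he1]; exact ha1, by rw [he2]; exact ha2⟩

end Aux

/-- Case (2,23,45,1): each of `x0, x1` (the vertices with no neighbor in the
4-clique `K`) has exactly one neighbor among the vertices with exactly 1
neighbor in `K`, and these two neighbors are distinct. -/
theorem stmt8 {V : Type*} [Fintype V] [DecidableEq V]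
    (G : SimpleGraph V) [DecidableRel G.Adj]
    (hG : G.IsSRGWith 75 32 10 16)
    (K : Finset V) (hK : G.IsNClique 4 K)
    (hb0 : bcount G K 0 = 2) (hb1 : bcount G K 1 = 23)
    (hb2 : bcount G K 2 = 45) (hb3 : bcount G K 3 = 1) (hb4 : bcount G K 4 = 0)
    (x0 x1 x3 : V) (hne : x0 ≠ x1)
    (hx0K : x0 ∉ K) (hx0 : nbrs G K x0 = 0)
    (hx1K : x1 ∉ K) (hx1 : nbrs G K x1 = 0)
    (hx3K : x3 ∉ K) (hx3 : nbrs G K x3 = 3)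
    (hnadj : ¬ G.Adj x0 x1) (h03 : G.Adj x0 x3) (h13 : G.Adj x1 x3) :
    (((univ \ K).filter (fun y => nbrs G K y = 1 ∧ G.Adj x0 y)).card = 1) ∧
    (((univ \ K).filter (fun y => nbrs G K y = 1 ∧ G.Adj x1 y)).card = 1) ∧
    ((univ \ K).filter (fun y => nbrs G K y = 1 ∧ G.Adj x0 y) ≠
      (univ \ K).filter (fun y => nbrs G K y = 1 ∧ G.Adj x1 y)) := by
  classical
  obtain ⟨hc01, hc02⟩ := type_counts G hG K hK hb0 hb3 hb4 x0 x1 x3 hne hx0K hx0 hx1K hx1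
    hx3K hx3 hnadj h03
  obtain ⟨hc11, hc12⟩ := type_counts G hG K hK hb0 hb3 hb4 x1 x0 x3 hne.symm hx1K hx1 hx0K hx0
    hx3K hx3 (fun h => hnadj h.symm) h13
  refine ⟨hc01, hc11, ?_⟩
  intro heq
  -- the unique shared type-1 neighbor y
  obtain ⟨y, hy⟩ := card_eq_one.mp hc01
  have hy0 : y ∈ (univ \ K).filter (fun y => nbrs G K y = 1 ∧ G.Adj x0 y) := by
    rw [hy]; exact mem_singleton_self y
  have hy1 : y ∈ (univ \ K).filter (fun y => nbrs G K y = 1 ∧ G.Adj x1 y) := by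
    rw [← heq, hy]; exact mem_singleton_self y
  obtain ⟨hyK, hy_n, hy_a0⟩ := mem_filter.mp hy0
  have hy_a1 : G.Adj x1 y := (mem_filter.mp hy1).2.2
  -- common neighbors of x0 and x1
  set C : Finset V := univ.filter (fun z => G.Adj x0 z ∧ G.Adj x1 z) with hC
  have hCcard : C.card = 16 := common_card16 G hG hne hnadj
  have hCK : ∀ z ∈ C, z ∉ K := by
    intro z hz
    exact adj_notMem G hx0 (mem_filter.mp hz).2.1
  have hmaps : ∀ z ∈ C, nbrs G K z ∈ Finset.range 5 := by
    intro z _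
    have : nbrs G K z ≤ K.card := card_filter_le _ _
    rw [hK.card_eq] at this
    exact mem_range.mpr (by omega)
  set c : ℕ → ℕ := fun i => (C.filter (fun z => nbrs G K z = i)).card with hc
  have hcsum : C.card = ∑ i ∈ Finset.range 5, c i := card_eq_sum_card_fiberwise hmaps
  -- b-sets
  have hb0set : (univ \ K).filter (fun z => nbrs G K z = 0) = {x0, x1} := by
    apply Finset.eq_of_superset_of_card_ge
    · intro z hz
      rcases mem_insert.mp hz with h | h
      · subst h; exact mem_filter.mpr ⟨mem_sdiff.mpr ⟨mem_univ _, hx0K⟩, hx0⟩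
      · rw [mem_singleton] at h; subst h
        exact mem_filter.mpr ⟨mem_sdiff.mpr ⟨mem_univ _, hx1K⟩, hx1⟩
    · rw [bcount] at hb0
      rw [hb0, card_insert_of_notMem (by simp [hne]), card_singleton]
  have hb3set : (univ \ K).filter (fun z => nbrs G K z = 3) = {x3} := by
    apply Finset.eq_of_superset_of_card_ge
    · intro z hz
      rw [mem_singleton] at hz; subst hz
      exact mem_filter.mpr ⟨mem_sdiff.mpr ⟨mem_univ _, hx3K⟩, hx3⟩
    · rw [bcount] at hb3
      rw [hb3, card_singleton]
  have hc0 : c 0 = 0 := by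
    show (C.filter (fun z => nbrs G K z = 0)).card = 0
    rw [card_eq_zero, eq_empty_iff_forall_notMem]
    intro z hz
    rcases mem_filter.mp hz with ⟨hzC, hz0⟩
    obtain ⟨ha0, ha1⟩ := (mem_filter.mp hzC).2
    have : z ∈ (univ \ K).filter (fun z => nbrs G K z = 0) :=
      mem_filter.mpr ⟨mem_sdiff.mpr ⟨mem_univ _, hCK z hzC⟩, hz0⟩
    rw [hb0set] at this
    rcases mem_insert.mp this with h | h
    · exact (G.ne_of_adj ha0).symm h
    · rw [mem_singleton] at h; exact (G.ne_of_adj ha1).symm h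
  have hc1 : c 1 = 1 := by
    show (C.filter (fun z => nbrs G K z = 1)).card = 1
    have : C.filter (fun z => nbrs G K z = 1) = {y} := by
      apply Finset.Subset.antisymm
      · intro z hz
        rcases mem_filter.mp hz with ⟨hzC, hz1⟩
        have : z ∈ (univ \ K).filter (fun y => nbrs G K y = 1 ∧ G.Adj x0 y) :=
          mem_filter.mpr ⟨mem_sdiff.mpr ⟨mem_univ _, hCK z hzC⟩,
            hz1, (mem_filter.mp hzC).2.1⟩
        rw [hy] at this
        exact this
      · rw [singleton_subset_iff]
        exact mem_filter.mpr ⟨mem_filter.mpr ⟨mem_univ _, hy_a0, hy_a1⟩, hy_n⟩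
    rw [this, card_singleton]
  have hc3 : c 3 = 1 := by
    show (C.filter (fun z => nbrs G K z = 3)).card = 1
    have : C.filter (fun z => nbrs G K z = 3) = {x3} := by
      apply Finset.Subset.antisymm
      · intro z hz
        rcases mem_filter.mp hz with ⟨hzC, hz3⟩
        have : z ∈ (univ \ K).filter (fun z => nbrs G K z = 3) :=
          mem_filter.mpr ⟨mem_sdiff.mpr ⟨mem_univ _, hCK z hzC⟩, hz3⟩
        rw [hb3set] at this
        exact this
      · rw [singleton_subset_iff]
        exact mem_filter.mpr ⟨mem_filter.mpr ⟨mem_univ _, h03, h13⟩, hx3⟩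
    rw [this, card_singleton]
  have hc4 : c 4 = 0 := by
    show (C.filter (fun z => nbrs G K z = 4)).card = 0
    rw [card_eq_zero, eq_empty_iff_forall_notMem]
    intro z hz
    rcases mem_filter.mp hz with ⟨hzC, hz4⟩
    have hmem : z ∈ (univ \ K).filter (fun z => nbrs G K z = 4) :=
      mem_filter.mpr ⟨mem_sdiff.mpr ⟨mem_univ _, hCK z hzC⟩, hz4⟩
    rw [bcount] at hb4
    rw [card_eq_zero] at hb4
    rw [hb4] at hmem
    exact absurd hmem (notMem_empty z)
  -- so c 2 = 14
  rw [hCcard] at hcsum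
  rw [Finset.sum_range_succ, Finset.sum_range_succ, Finset.sum_range_succ,
    Finset.sum_range_succ, Finset.sum_range_succ, Finset.sum_range_zero] at hcsum
  have hc2 : c 2 = 14 := by omega
  -- T0, T1: type-2 neighbors
  set T0 : Finset V := (univ \ K).filter (fun y => nbrs G K y = 2 ∧ G.Adj x0 y) with hT0
  set T1 : Finset V := (univ \ K).filter (fun y => nbrs G K y = 2 ∧ G.Adj x1 y) with hT1
  have hint : T0 ∩ T1 = C.filter (fun z => nbrs G K z = 2) := by
    ext z
    simp only [mem_inter, hT0, hT1, hC, mem_filter, mem_sdiff, mem_univ, true_and]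
    constructor
    · rintro ⟨⟨hzK, h2, ha0⟩, ⟨_, _, ha1⟩⟩
      exact ⟨⟨ha0, ha1⟩, h2⟩
    · rintro ⟨⟨ha0, ha1⟩, h2⟩
      exact ⟨⟨adj_notMem G hx0 ha0, h2, ha0⟩, ⟨adj_notMem G hx0 ha0, h2, ha1⟩⟩
  have hintcard : (T0 ∩ T1).card = 14 := by rw [hint]; exact hc2
  have hunion : (T0 ∪ T1).card = 46 := by
    have := Finset.card_union_add_card_inter T0 T1
    rw [hintcard, hc02, hc12] at this
    omega
  have hsub : T0 ∪ T1 ⊆ (univ \ K).filter (fun z => nbrs G K z = 2) := by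
    intro z hz
    rcases mem_union.mp hz with h | h
    · rcases mem_filter.mp h with ⟨hzK, h2, _⟩
      exact mem_filter.mpr ⟨hzK, h2⟩
    · rcases mem_filter.mp h with ⟨hzK, h2, _⟩
      exact mem_filter.mpr ⟨hzK, h2⟩
  have := card_le_card hsub
  rw [hunion] at this
  rw [bcount] at hb2
  omega
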